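/- In Mem⁰, each natural number m occurs only finitely many times as a frontier value; consequently the sequence of frontier values n ↦ G(n_∞) is unbounded. -/
import Mathlib


/-- Grundy value of Mem⁰: options of (n,k) are (n-a, a) for 1 ≤ a ≤ n, a ≠ k. -/
noncomputable def memZeroG (n k : ℕ) : ℕ :=
  sInf {v : ℕ | v ∉ (((Finset.Icc 1 n).erase k).attach.image
    (fun a => memZeroG (n - a.1) a.1))}
termination_by n
decreasing_by
  have h := Finset.mem_Icc.mp (Finset.mem_of_mem_erase a.2)
  omega

lemma attach_image_eq (s : Finset ℕ) (f : ℕ → ℕ) :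
    s.attach.image (fun a => f a.1) = s.image f := by
  rw [show (fun a : {x // x ∈ s} => f a.1) = f ∘ Subtype.val from rfl,
    ← Finset.image_image, Finset.attach_image_val]

/-- When the forbidden index exceeds `n`, the definition simplifies. -/
lemma memZeroG_of_gt {n k : ℕ} (h : n < k) :
    memZeroG n k =
      sInf {v : ℕ | v ∉ (Finset.Icc 1 n).image (fun a => memZeroG (n - a) a)} := by
  have h1 : ((Finset.Icc 1 n).erase k) = Finset.Icc 1 n :=
    Finset.erase_eq_of_notMem (by simp [Finset.mem_Icc]; omega)
  have h2 : ((Finset.Icc 1 n).attach.image (fun a => memZeroG (n - a.1) a.1)) =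
      (Finset.Icc 1 n).image (fun a => memZeroG (n - a) a) :=
    attach_image_eq (Finset.Icc 1 n) (fun a => memZeroG (n - a) a)
  rw [memZeroG, h1, h2]

lemma memZeroG_congr {n k k' : ℕ} (h : n < k) (h' : n < k') :
    memZeroG n k = memZeroG n k' := by
  rw [memZeroG_of_gt h, memZeroG_of_gt h']

/-- Final Frontier Theorem: if `N > 2n` then `G(N,N+1) ≠ G(n,n+1)`. -/
lemma finalFrontier {n N : ℕ} (h : 2 * n < N) :
    memZeroG N (N + 1) ≠ memZeroG n (n + 1) := by
  rw [memZeroG_of_gt (Nat.lt_succ_self N)]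
  set t : Finset ℕ := (Finset.Icc 1 N).image (fun a => memZeroG (N - a) a) with ht
  set S : Set ℕ := {v : ℕ | v ∉ t} with hS
  have hne : S.Nonempty := by
    refine ⟨t.sup id + 1, fun hmem => ?_⟩
    have := Finset.le_sup (f := id) hmem
    simp only [id_eq] at this
    omega
  have hmemS : sInf S ∈ S := Nat.sInf_mem hne
  intro heq
  apply hmemS
  have hNn : memZeroG (N - (N - n)) (N - n) = memZeroG n (n + 1) := by
    rw [show N - (N - n) = n by omega]
    exact memZeroG_congr (by omega) (Nat.lt_succ_self n)
  rw [ht]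
  rw [heq, ← hNn]
  exact Finset.mem_image_of_mem _ (Finset.mem_Icc.mpr (by omega))

/-- Each m occurs only finitely often as a frontier value; hence the frontier
values are unbounded. -/
theorem memZero_frontier_unbounded :
    (∀ m : ℕ, {n : ℕ | memZeroG n (n + 1) = m}.Finite) ∧
    (∀ B : ℕ, ∃ n : ℕ, B < memZeroG n (n + 1)) := by
  have hfin : ∀ m : ℕ, {n : ℕ | memZeroG n (n + 1) = m}.Finite := by
    intro m
    rcases Set.eq_empty_or_nonempty {n : ℕ | memZeroG n (n + 1) = m} with he | hne
    · rw [he]; exact Set.finite_empty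
    · set n0 := sInf {n : ℕ | memZeroG n (n + 1) = m} with hn0
      have hmem : memZeroG n0 (n0 + 1) = m := Nat.sInf_mem hne
      refine Set.Finite.subset (Set.finite_Iic (2 * n0)) ?_
      intro N hN
      simp only [Set.mem_setOf_eq] at hN
      by_contra hgt
      simp only [Set.mem_Iic, not_le] at hgt
      exact finalFrontier hgt (hN.trans hmem.symm)
  refine ⟨hfin, fun B => ?_⟩
  have hfin2 : {n : ℕ | memZeroG n (n + 1) ≤ B}.Finite := by
    refine Set.Finite.subset (Set.Finite.biUnion (Set.finite_Iic B)
      (fun m _ => hfin m)) ?_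
    intro n hn
    exact Set.mem_biUnion hn rfl
  obtain ⟨n, hn⟩ := (hfin2.infinite_compl).nonempty
  exact ⟨n, by simpa using hn⟩
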